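/- The HL-code of length 2^m (m = 2l even), generated by v_0, all v_i, all products of fewer than l of the v_i, and the products indexed by a maximal complement-free set Y of l-subsets of {1,...,m}, has dimension exactly 2^{m-1}. -/

import Mathlib

/-- `(v i)_j` = bit `i` of `j`. -/
def vVec (m : ℕ) (i : Fin m) (j : Fin (2 ^ m)) : ZMod 2 :=
  if Nat.testBit (j : ℕ) (i : ℕ) then 1 else 0

/-- Monomial evaluation vector `∏_{i ∈ S} v i`. -/
def monomial (m : ℕ) (S : Finset (Fin m)) : Fin (2 ^ m) → ZMod 2 :=
  fun j => ∏ i ∈ S, vVec m i j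

lemma sum_range_two_pow (n : ℕ) : ∑ i ∈ Finset.range n, 2 ^ i = 2 ^ n - 1 := by
  induction n with
  | zero => simp
  | succ n ih =>
    rw [Finset.sum_range_succ, ih]
    have h1 : 1 ≤ 2 ^ n := Nat.one_le_two_pow
    have h2 : 2 ^ (n + 1) = 2 ^ n * 2 := pow_succ 2 n
    omega

lemma testBit_sum_two_pow (S : Finset ℕ) (k : ℕ) :
    (∑ i ∈ S, 2 ^ i).testBit k = true ↔ k ∈ S := by
  induction S using Finset.induction_on_max with
  | empty => simp
  | insert a S hlt ih =>
    have haS : a ∉ S := fun h => lt_irrefl a (hlt a h)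
    have hsub : S ⊆ Finset.range a := fun x hx => Finset.mem_range.mpr (hlt x hx)
    have hbound : ∑ i ∈ S, 2 ^ i < 2 ^ a := by
      have hle : ∑ i ∈ S, 2 ^ i ≤ ∑ i ∈ Finset.range a, 2 ^ i :=
        Finset.sum_le_sum_of_subset hsub
      rw [sum_range_two_pow] at hle
      have h1 : 1 ≤ 2 ^ a := Nat.one_le_two_pow
      omega
    rw [Finset.sum_insert haS]
    rcases lt_trichotomy k a with hk | hk | hk
    · rw [Nat.testBit_two_pow_add_gt hk, ih]
      simp only [Finset.mem_insert]
      constructor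
      · exact fun h => Or.inr h
      · rintro (rfl | h)
        · omega
        · exact h
    · subst hk
      rw [Nat.testBit_two_pow_add_eq, Nat.testBit_eq_false_of_lt hbound]
      simp
    · have hb2 : 2 ^ a + ∑ i ∈ S, 2 ^ i < 2 ^ k := by
        calc 2 ^ a + ∑ i ∈ S, 2 ^ i < 2 ^ a + 2 ^ a := by omega
        _ = 2 ^ (a + 1) := by rw [pow_succ]; omega
        _ ≤ 2 ^ k := Nat.pow_le_pow_right (by norm_num) (by omega)
      rw [Nat.testBit_eq_false_of_lt hb2]
      simp only [Bool.false_eq_true, false_iff, Finset.mem_insert]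
      rintro (rfl | h)
      · omega
      · exact absurd (hlt k h) (by omega)

/-- The index of the evaluation point whose bit set is `S`. -/
def eIdx (m : ℕ) (S : Finset (Fin m)) : Fin (2 ^ m) :=
  ⟨∑ i ∈ S, 2 ^ (i : ℕ), by
    have hsub : S ⊆ Finset.univ := Finset.subset_univ S
    have h1 : ∑ i ∈ S, 2 ^ (i : ℕ) ≤ ∑ i : Fin m, 2 ^ (i : ℕ) :=
      Finset.sum_le_sum_of_subset hsub
    have h2 : ∑ i : Fin m, 2 ^ (i : ℕ) = 2 ^ m - 1 := by
      rw [Fin.sum_univ_eq_sum_range (fun i => 2 ^ i) m, sum_range_two_pow]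
    have h3 : 1 ≤ 2 ^ m := Nat.one_le_two_pow
    omega⟩

lemma testBit_eIdx (m : ℕ) (S : Finset (Fin m)) (k : Fin m) :
    Nat.testBit ((eIdx m S : ℕ)) (k : ℕ) = true ↔ k ∈ S := by
  have hinj : Function.Injective (Fin.val : Fin m → ℕ) := Fin.val_injective
  have : (eIdx m S : ℕ) = ∑ j ∈ S.image Fin.val, 2 ^ j := by
    rw [Finset.sum_image (fun x _ y _ h => hinj h)]
    rfl
  rw [this, testBit_sum_two_pow]
  simp only [Finset.mem_image]
  constructor
  · rintro ⟨a, ha, hav⟩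
    rwa [hinj hav] at ha
  · exact fun h => ⟨k, h, rfl⟩

lemma monomial_eval (m : ℕ) (T S : Finset (Fin m)) :
    monomial m T (eIdx m S) = if T ⊆ S then 1 else 0 := by
  unfold monomial vVec
  by_cases h : T ⊆ S
  · rw [if_pos h]
    apply Finset.prod_eq_one
    intro i hi
    rw [if_pos ((testBit_eIdx m S i).mpr (h hi))]
  · rw [if_neg h]
    obtain ⟨i, hiT, hiS⟩ := Finset.not_subset.mp h
    apply Finset.prod_eq_zero hiT
    rw [if_neg]
    intro hb
    exact hiS ((testBit_eIdx m S i).mp hb)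

lemma psi_monomial (m : ℕ) (U S : Finset (Fin m)) :
    ∑ T ∈ S.powerset, monomial m U (eIdx m T) = if U = S then 1 else 0 := by
  have : ∀ T ∈ S.powerset, monomial m U (eIdx m T) = if U ⊆ T then (1 : ZMod 2) else 0 :=
    fun T _ => monomial_eval m U T
  rw [Finset.sum_congr rfl this, ← Finset.sum_filter]
  have hfilter : S.powerset.filter (fun T => U ⊆ T) = Finset.Icc U S := by
    ext T
    simp [Finset.mem_powerset, Finset.mem_Icc, and_comm]
  rw [hfilter]
  simp only [Finset.sum_const, smul_eq_mul, mul_one]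
  by_cases h : U ⊆ S
  · rw [Finset.card_Icc_finset h]
    by_cases he : U = S
    · subst he; simp
    · have hlt : U.card < S.card := Finset.card_lt_card (lt_of_le_of_ne h he)
      rw [if_neg he]
      obtain ⟨d, hd⟩ : ∃ d, S.card - U.card = d + 1 := ⟨S.card - U.card - 1, by omega⟩
      rw [hd, pow_succ, nsmul_eq_mul]
      push_cast
      have h2 : (2 : ZMod 2) = 0 := by decide
      simp [h2]
  · have : Finset.Icc U S = ∅ := by
      rw [Finset.Icc_eq_empty]
      exact fun hle => h hle
    rw [this]
    have hne : U ≠ S := fun he => h (he ▸ le_refl S)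
    simp [hne]

lemma monomial_linearIndependent (m : ℕ) :
    LinearIndependent (ZMod 2) (fun S : Finset (Fin m) => monomial m S) := by
  rw [Fintype.linearIndependent_iff]
  intro g hg S
  have key : ∀ T : Finset (Fin m),
      (∑ U : Finset (Fin m), g U • monomial m U) (eIdx m T) = 0 := by
    intro T; rw [hg]; rfl
  have : ∑ T ∈ S.powerset, (∑ U : Finset (Fin m), g U • monomial m U) (eIdx m T) = 0 := by
    simp [key]
  simp only [Finset.sum_apply, Pi.smul_apply, smul_eq_mul] at this
  rw [Finset.sum_comm] at this
  have heq : ∀ U : Finset (Fin m),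
      ∑ T ∈ S.powerset, g U * monomial m U (eIdx m T) = if U = S then g U else 0 := by
    intro U
    rw [← Finset.mul_sum, psi_monomial]
    by_cases h : U = S <;> simp [h]
  rw [Finset.sum_congr rfl (fun U _ => heq U), Finset.sum_ite_eq' Finset.univ S g] at this
  simpa using this

lemma monomial_injective (m : ℕ) : Function.Injective (monomial m) :=
  (monomial_linearIndependent m).injective

/-- The HL-code of length `2^m` (`m = 2l`), generated by all monomials of degree `< l`
together with the monomials indexed by a maximal complement-free set `Y` of `l`-subsets,
has dimension exactly `2^(m-1)`. -/
theorem HL_code_dimension (l m : ℕ) (hl : 0 < l) (hm : m = 2 * l)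
    (Y : Finset (Finset (Fin m)))
    (hYcard : ∀ S ∈ Y, S.card = l)
    (hYfree : ∀ S ∈ Y, Sᶜ ∉ Y)
    (hYmax : 2 * Y.card = Nat.choose (2 * l) l) :
    Module.finrank (ZMod 2)
      (Submodule.span (ZMod 2)
        ({x | ∃ S : Finset (Fin m), S.card < l ∧ x = monomial m S} ∪
         {x | ∃ S ∈ Y, x = monomial m S} : Set (Fin (2 ^ m) → ZMod 2))) =
      2 ^ (m - 1) := by
  classical
  set A : Finset (Finset (Fin m)) := (Finset.univ.filter fun S => S.card < l) ∪ Y with hA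
  set s : Finset (Fin (2 ^ m) → ZMod 2) := A.image (monomial m) with hs
  -- the generating set equals ↑s
  have hset : ({x | ∃ S : Finset (Fin m), S.card < l ∧ x = monomial m S} ∪
      {x | ∃ S ∈ Y, x = monomial m S} : Set (Fin (2 ^ m) → ZMod 2)) = ↑s := by
    ext x
    simp only [Set.mem_union, Set.mem_setOf_eq, hs, Finset.coe_image, Set.mem_image,
      Finset.mem_coe, hA, Finset.mem_union, Finset.mem_filter, Finset.mem_univ, true_and]
    constructor
    · rintro (⟨S, hS, rfl⟩ | ⟨S, hS, rfl⟩)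
      · exact ⟨S, Or.inl hS, rfl⟩
      · exact ⟨S, Or.inr hS, rfl⟩
    · rintro ⟨S, hS | hS, rfl⟩
      · exact Or.inl ⟨S, hS, rfl⟩
      · exact Or.inr ⟨S, hS, rfl⟩
  rw [hset]
  -- linear independence on s
  have hli : LinearIndependent (ZMod 2)
      (Subtype.val : ((s : Set (Fin (2 ^ m) → ZMod 2)) : Type) → (Fin (2 ^ m) → ZMod 2)) := by
    have h1 := (monomial_linearIndependent m).linearIndepOn_id
    apply h1.mono
    intro x hx
    simp only [hs, Finset.coe_image, Set.mem_image, Finset.mem_coe] at hx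
    obtain ⟨S, _, rfl⟩ := hx
    exact Set.mem_range_self S
  rw [finrank_span_finset_eq_card hli]
  -- cardinality
  rw [hs, Finset.card_image_of_injective _ (monomial_injective m)]
  have hdisj : Disjoint (Finset.univ.filter fun S : Finset (Fin m) => S.card < l) Y := by
    rw [Finset.disjoint_left]
    intro S hS hSY
    rw [Finset.mem_filter] at hS
    exact absurd (hYcard S hSY) (by omega)
  rw [hA, Finset.card_union_of_disjoint hdisj]
  -- card of the filter = ∑_{j < l} choose m j
  have hfilter : (Finset.univ.filter fun S : Finset (Fin m) => S.card < l) =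
      (Finset.range l).biUnion (fun j => Finset.powersetCard j Finset.univ) := by
    ext S
    simp only [Finset.mem_filter, Finset.mem_univ, true_and, Finset.mem_biUnion,
      Finset.mem_range, Finset.mem_powersetCard_univ]
    constructor
    · exact fun h => ⟨S.card, h, rfl⟩
    · rintro ⟨j, hj, rfl⟩; exact hj
  have hpair : ∀ j ∈ Finset.range l, ∀ k ∈ Finset.range l, j ≠ k →
      Disjoint (Finset.powersetCard j (Finset.univ : Finset (Fin m)))
        (Finset.powersetCard k Finset.univ) := by
    intro j _ k _ hjk
    rw [Finset.disjoint_left]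
    intro S hSj hSk
    rw [Finset.mem_powersetCard_univ] at hSj hSk
    exact hjk (hSj ▸ hSk)
  have hcardfilter : (Finset.univ.filter fun S : Finset (Fin m) => S.card < l).card =
      ∑ j ∈ Finset.range l, Nat.choose (2 * l) j := by
    rw [hfilter, Finset.card_biUnion hpair]
    apply Finset.sum_congr rfl
    intro j _
    rw [Finset.card_powersetCard, Finset.card_univ, Fintype.card_fin, hm]
  rw [hcardfilter]
  -- counting identity
  have hsym : ∑ j ∈ Finset.Ico (l + 1) (2 * l + 1), Nat.choose (2 * l) j =
      ∑ j ∈ Finset.range l, Nat.choose (2 * l) j := by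
    apply Finset.sum_nbij' (fun a => 2 * l - a) (fun a => 2 * l - a)
    · intro a ha
      rw [Finset.mem_Ico] at ha
      rw [Finset.mem_range]
      omega
    · intro a ha
      rw [Finset.mem_range] at ha
      rw [Finset.mem_Ico]
      omega
    · intro a ha
      rw [Finset.mem_Ico] at ha
      omega
    · intro a ha
      rw [Finset.mem_range] at ha
      omega
    · intro a ha
      rw [Finset.mem_Ico] at ha
      rw [Nat.choose_symm (by omega)]
  have htotal : ∑ j ∈ Finset.range (2 * l + 1), Nat.choose (2 * l) j = 2 ^ (2 * l) :=
    Nat.sum_range_choose (2 * l)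
  have hsplit : ∑ j ∈ Finset.range (2 * l + 1), Nat.choose (2 * l) j =
      (∑ j ∈ Finset.range (l + 1), Nat.choose (2 * l) j) +
      ∑ j ∈ Finset.Ico (l + 1) (2 * l + 1), Nat.choose (2 * l) j := by
    rw [Finset.range_eq_Ico, Finset.range_eq_Ico]
    exact (Finset.sum_Ico_consecutive (fun j => Nat.choose (2 * l) j) (m := 0) (n := l + 1) (k := 2 * l + 1) (by omega) (by omega)).symm
  have hstep : ∑ j ∈ Finset.range (l + 1), Nat.choose (2 * l) j =
      (∑ j ∈ Finset.range l, Nat.choose (2 * l) j) + Nat.choose (2 * l) l :=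
    Finset.sum_range_succ _ _
  have hkey : 2 * (∑ j ∈ Finset.range l, Nat.choose (2 * l) j) + Nat.choose (2 * l) l =
      2 ^ (2 * l) := by
    rw [← htotal, hsplit, hstep, hsym]
    ring
  have hpow : 2 ^ (2 * l) = 2 * 2 ^ (m - 1) := by
    have : m - 1 + 1 = 2 * l := by omega
    rw [← this, pow_succ]
    ring
  omega
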